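/- In Setting (V), let R(r̂) := Ř((I−P)(r⁻¹(r̂))) for r̂ ∈ X̃, assume ‖P(r⁻¹(r̂₁)) − P(r⁻¹(r̂₂))‖ ≤ C_Q·Q(r̂₁, r̂₂) for all r̂₁, r̂₂ ∈ X̃, fix β > 0 and set C̄ := 2^{2p−2}·max{1, ‖K‖^p·L_r^p, ‖K‖^p·L_r^p·C_Q^p/β}. Assume the regularization parameters satisfy η ≤ C_η·δ^p and τ̲·δ^p ≤ α·(−ψ)*(−1/(2C̄α)) ≤ τ̄·δ^p for constants C_η > 0 and 0 < τ̲ ≤ τ̄, and that (−ψ)*(−1/(C̄α)) < ∞. Let (r̂^δ, x^δ) ∈ X̃ × U be an η-minimizer of the Tikhonov functional, i.e., J(r̂^δ, x^δ) ≤ J(r̂, x) + η for all (r̂, x) ∈ X̃ × U, where J(r̂, x) := ‖K r̂ + F(x₀) − y^δ‖^p + α·R(r̂) + β·Q(r(x), r̂)^p + ‖P(x)‖^p. Then: Δ_ξ((I−P)(r⁻¹(r̂^δ)), x†) ≤ (1/(1−b))·((2+C_η)/τ̲ + 1)·(−ψ)*(−1/(2C̄α)), and 2^{1−p}·‖K(r̂^δ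 − r(x†))‖^p + β·Q(r(x^δ), r̂^δ)^p + ‖P(x^δ)‖^p ≤ 2·(2 + C_η + τ̄)·δ^p. -/

import Mathlib

/-- The convex conjugate of `-ψ`: `(-ψ)*(s) = sup_{t ≥ 0} (s·t + ψ(t)) ∈ [0,∞]`. -/
noncomputable def negConj (ψ : ℝ → ℝ) (s : ℝ) : EReal :=
  ⨆ t : {t : ℝ // 0 ≤ t}, ((s * t.1 + ψ t.1 : ℝ) : EReal)

/-- Two-term power mean inequality for real exponents `p ≥ 1`. -/
lemma aux_two_rpow (p : ℝ) (hp : 1 ≤ p) {x y : ℝ} (hx : 0 ≤ x) (hy : 0 ≤ y) :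
    (x + y) ^ p ≤ 2 ^ (p - 1) * (x ^ p + y ^ p) := by
  have h := NNReal.rpow_add_le_mul_rpow_add_rpow ⟨x, hx⟩ ⟨y, hy⟩ hp
  have h2 := NNReal.coe_le_coe.2 h
  push_cast at h2
  exact h2

/-- Four-term power mean inequality for real exponents `p ≥ 1`. -/
lemma aux_four_rpow (p : ℝ) (hp : 1 ≤ p) {a b c d : ℝ}
    (ha : 0 ≤ a) (hb : 0 ≤ b) (hc : 0 ≤ c) (hd : 0 ≤ d) :
    (a + b + c + d) ^ p ≤ 2 ^ (2 * p - 2) * (a ^ p + b ^ p + c ^ p + d ^ p) := by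
  have h1 : (a + b + c + d) ^ p ≤ 2 ^ (p - 1) * ((a + b) ^ p + (c + d) ^ p) := by
    have := aux_two_rpow p hp (add_nonneg ha hb) (add_nonneg hc hd)
    calc (a + b + c + d) ^ p = ((a + b) + (c + d)) ^ p := by ring_nf
      _ ≤ _ := this
  have h2 : (a + b) ^ p ≤ 2 ^ (p - 1) * (a ^ p + b ^ p) := aux_two_rpow p hp ha hb
  have h3 : (c + d) ^ p ≤ 2 ^ (p - 1) * (c ^ p + d ^ p) := aux_two_rpow p hp hc hd
  have h2p : (0 : ℝ) < 2 ^ (p - 1) := Real.rpow_pos_of_pos two_pos _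
  have hmul : (2 : ℝ) ^ (p - 1) * 2 ^ (p - 1) = 2 ^ (2 * p - 2) := by
    rw [← Real.rpow_add two_pos]; ring_nf
  calc (a + b + c + d) ^ p ≤ 2 ^ (p - 1) * ((a + b) ^ p + (c + d) ^ p) := h1
    _ ≤ 2 ^ (p - 1) * (2 ^ (p - 1) * (a ^ p + b ^ p) + 2 ^ (p - 1) * (c ^ p + d ^ p)) := by
        apply mul_le_mul_of_nonneg_left _ h2p.le
        linarith
    _ = 2 ^ (2 * p - 2) * (a ^ p + b ^ p + c ^ p + d ^ p) := by
        rw [← hmul]; ring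

/-- Convergence rates for variational regularization under range invariance and a
variational source condition (Theorem 2.2 of the paper). -/
theorem stmt_4
    (p : ℝ) (hp : 1 ≤ p) (b : ℝ) (hb0 : 0 < b) (hb1 : b < 1)
    {X Xt Y : Type*} [NormedAddCommGroup X] [NormedSpace ℝ X]
    [NormedAddCommGroup Xt] [NormedSpace ℝ Xt]
    [NormedAddCommGroup Y] [NormedSpace ℝ Y]
    (Xc : Submodule ℝ X) (U : Set X) (x0 xd : X)
    (hx0U : x0 ∈ U) (hx0c : x0 ∈ Xc) (hxdU : xd ∈ U) (hxdc : xd ∈ Xc)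
    (F : X → Y) (K : Xt →L[ℝ] Y)
    (r : X → Xt) (rinv : Xt → X)
    (hrleft : ∀ x ∈ U, rinv (r x) = x)
    (hrmem : ∀ v : Xt, rinv v ∈ U) (hrright : ∀ v : Xt, r (rinv v) = v)
    (Lr : ℝ) (hLr : ∀ x1 ∈ U, ∀ x2 ∈ U, ‖r x1 - r x2‖ ≤ Lr * ‖x1 - x2‖)
    (hRI : ∀ x ∈ U, F x - F x0 = K (r x))
    (P Ip : X → X) (hPIp : ∀ x, P x = x - Ip x)
    (hIpXc : ∀ x, Ip x ∈ Xc)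
    (hPxd : P xd = 0) (hPx0 : P x0 = 0)
    (hIprinvU : ∀ v : Xt, Ip (rinv v) ∈ U)
    (δ : ℝ) (hδ : 0 < δ) (yδ : Y) (hnoise : ‖F xd - yδ‖ ≤ δ)
    (Rc : X → ℝ) (hRcnn : ∀ x, 0 ≤ Rc x)
    (ξ : X →L[ℝ] ℝ) (hξ : ∀ xc ∈ Xc, ξ (xc - xd) ≤ Rc xc - Rc xd)
    (ψ : ℝ → ℝ) (hψcont : ContinuousOn ψ (Set.Ici (0 : ℝ)))
    (hψmono : MonotoneOn ψ (Set.Ici (0 : ℝ)))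
    (hψ0 : ψ 0 = 0) (hψnn : ∀ t : ℝ, 0 ≤ t → 0 ≤ ψ t)
    (hVSC : ∀ xc, xc ∈ Xc → xc ∈ U →
      -(ξ (xc - xd)) ≤ b * (Rc xc - Rc xd - ξ (xc - xd)) + ψ (‖K (r xc - r xd)‖ ^ p))
    (Q : Xt → Xt → ℝ) (hQnn : ∀ v1 v2, 0 ≤ Q v1 v2) (hQdiag : ∀ v, Q v v = 0)
    (CQ : ℝ) (hCQ : ∀ v1 v2 : Xt, ‖P (rinv v1) - P (rinv v2)‖ ≤ CQ * Q v1 v2)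
    (β : ℝ) (hβ : 0 < β)
    (Cb : ℝ)
    (hCb : Cb = (2 : ℝ) ^ (2 * p - 2) *
      max (max 1 (‖K‖ ^ p * Lr ^ p)) (‖K‖ ^ p * Lr ^ p * CQ ^ p / β))
    (Cη α η τl τu : ℝ) (hCη : 0 < Cη) (hα : 0 < α)
    (hτl : 0 < τl) (hτlu : τl ≤ τu)
    (hη0 : 0 ≤ η) (hη : η ≤ Cη * δ ^ p)
    (hfin : negConj ψ (-(1 / (Cb * α))) ≠ ⊤)
    (hpar1 : ((τl * δ ^ p : ℝ) : EReal) ≤ (α : ℝ) * negConj ψ (-(1 / (2 * Cb * α))))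
    (hpar2 : ((α : ℝ) : EReal) * negConj ψ (-(1 / (2 * Cb * α))) ≤ ((τu * δ ^ p : ℝ) : EReal))
    (J : Xt → X → ℝ)
    (hJ : ∀ v x, J v x =
      ‖K v + F x0 - yδ‖ ^ p + α * Rc (Ip (rinv v)) + β * Q (r x) v ^ p + ‖P x‖ ^ p)
    (rδ : Xt) (xδ : X) (hxδU : xδ ∈ U)
    (hmin : ∀ v : Xt, ∀ x ∈ U, J rδ xδ ≤ J v x + η) :
    Rc (Ip (rinv rδ)) - Rc xd - ξ (Ip (rinv rδ) - xd) ≤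
        (1 / (1 - b)) * ((2 + Cη) / τl + 1) * (negConj ψ (-(1 / (2 * Cb * α)))).toReal ∧
      (2 : ℝ) ^ (1 - p) * ‖K (rδ - r xd)‖ ^ p + β * Q (r xδ) rδ ^ p + ‖P xδ‖ ^ p ≤
        2 * (2 + Cη + τu) * δ ^ p := by
  have hp0 : (0 : ℝ) < p := lt_of_lt_of_le one_pos hp
  have h2p : (0 : ℝ) < (2 : ℝ) ^ (2 * p - 2) := Real.rpow_pos_of_pos two_pos _
  have hCbpos : 0 < Cb := by
    rw [hCb]
    exact mul_pos h2p (lt_of_lt_of_le one_pos ((le_max_left 1 _).trans (le_max_left _ _)))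
  set s : ℝ := -(1 / (2 * Cb * α)) with hs
  -- extract the real value of the conjugate
  have hnc_nonneg : (0 : EReal) ≤ negConj ψ s := by
    have h := le_iSup (fun t : {t : ℝ // 0 ≤ t} => ((s * t.1 + ψ t.1 : ℝ) : EReal))
      (⟨0, le_refl 0⟩ : {t : ℝ // 0 ≤ t})
    simpa [negConj, hψ0] using h
  have hne_top : negConj ψ s ≠ ⊤ := by
    intro h
    rw [h, EReal.coe_mul_top_of_pos hα] at hpar2
    exact (EReal.coe_lt_top (τu * δ ^ p)).not_ge hpar2
  have hne_bot : negConj ψ s ≠ ⊥ := by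
    intro h
    rw [h] at hnc_nonneg
    exact (lt_irrefl _ (lt_of_le_of_lt hnc_nonneg (by simp : (⊥ : EReal) < 0)))
  set E : ℝ := (negConj ψ s).toReal with hE
  have hEeq : negConj ψ s = (E : EReal) := (EReal.coe_toReal hne_top hne_bot).symm
  have hE0 : 0 ≤ E := by
    rw [hEeq] at hnc_nonneg; exact_mod_cast hnc_nonneg
  have hpar1' : τl * δ ^ p ≤ α * E := by
    rw [hEeq, ← EReal.coe_mul, EReal.coe_le_coe_iff] at hpar1
    exact hpar1
  have hpar2' : α * E ≤ τu * δ ^ p := by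
    rw [hEeq, ← EReal.coe_mul, EReal.coe_le_coe_iff] at hpar2
    exact hpar2
  -- Fenchel-type inequality
  have hFen : ∀ t : ℝ, 0 ≤ t → ψ t ≤ t / (2 * Cb * α) + E := by
    intro t ht
    have h1 : ((s * t + ψ t : ℝ) : EReal) ≤ negConj ψ s :=
      le_iSup (fun t : {t : ℝ // 0 ≤ t} => ((s * t.1 + ψ t.1 : ℝ) : EReal))
        (⟨t, ht⟩ : {t : ℝ // 0 ≤ t})
    rw [hEeq, EReal.coe_le_coe_iff] at h1
    have h2 : s * t = -(t / (2 * Cb * α)) := by rw [hs]; ring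
    rw [h2] at h1
    linarith
  -- basic algebra facts
  have hIpxd : Ip xd = xd := by
    have h := hPIp xd
    rw [hPxd] at h
    exact (sub_eq_zero.mp h.symm).symm
  have hKrxd : K (r xd) + F x0 - yδ = F xd - yδ := by
    rw [← hRI xd hxdU]; abel
  have hJxd : J (r xd) xd = ‖F xd - yδ‖ ^ p + α * Rc xd := by
    rw [hJ, hKrxd, hrleft xd hxdU, hIpxd, hQdiag, hPxd, norm_zero,
      Real.zero_rpow (ne_of_gt hp0)]
    ring
  set m := ‖K rδ + F x0 - yδ‖ with hm
  set e := ‖P xδ‖ with he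
  set q := Q (r xδ) rδ with hq
  set xc := Ip (rinv rδ) with hxcdef
  have hm0 : 0 ≤ m := norm_nonneg _
  have he0 : 0 ≤ e := norm_nonneg _
  have hq0 : 0 ≤ q := hQnn _ _
  have hmp0 : 0 ≤ m ^ p := Real.rpow_nonneg hm0 p
  have hep0 : 0 ≤ e ^ p := Real.rpow_nonneg he0 p
  have hqp0 : 0 ≤ q ^ p := Real.rpow_nonneg hq0 p
  have hδp0 : 0 < δ ^ p := Real.rpow_pos_of_pos hδ p
  -- minimality comparison
  have key1 : m ^ p + α * Rc xc + β * q ^ p + e ^ p ≤ δ ^ p + α * Rc xd + η := by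
    have h := hmin (r xd) xd hxdU
    rw [hJ rδ xδ, hJxd] at h
    have hd : ‖F xd - yδ‖ ^ p ≤ δ ^ p := Real.rpow_le_rpow (norm_nonneg _) hnoise hp0.le
    linarith
  set T2 : ℝ := m ^ p + β * q ^ p + e ^ p with hT2
  have hT2nn : 0 ≤ T2 := by
    have : 0 ≤ β * q ^ p := mul_nonneg hβ.le hqp0
    rw [hT2]; linarith
  have hxcXc : xc ∈ Xc := hIpXc _
  have hxcU : xc ∈ U := hIprinvU rδ
  -- estimate on ‖K (r xc - r xd)‖
  set Lr' : ℝ := max 0 Lr with hLr'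
  set CQ' : ℝ := max 0 CQ with hCQ'
  set kL : ℝ := ‖K‖ * Lr' with hkL
  have hkL0 : 0 ≤ kL := mul_nonneg (norm_nonneg _) (le_max_left 0 Lr)
  have hCQ'0 : 0 ≤ CQ' := le_max_left 0 CQ
  have hA : ‖K (rδ - r xd)‖ ≤ m + δ := by
    have heq : K (rδ - r xd) = (K rδ + F x0 - yδ) - (F xd - yδ) := by
      rw [map_sub, ← hRI xd hxdU]; abel
    rw [heq]
    exact (norm_sub_le _ _).trans (add_le_add le_rfl hnoise)
  have hPr : ‖P (rinv rδ)‖ ≤ e + CQ' * q := by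
    have h1 := hCQ (r xδ) rδ
    rw [hrleft xδ hxδU] at h1
    have h2 : CQ * q ≤ CQ' * q := mul_le_mul_of_nonneg_right (le_max_right 0 CQ) hq0
    have h3 : ‖P (rinv rδ)‖ ≤ ‖P xδ‖ + ‖P xδ - P (rinv rδ)‖ := by
      have := norm_sub_le (P xδ) (P xδ - P (rinv rδ))
      rwa [sub_sub_cancel] at this
    linarith
  have hB : ‖K (r xc - rδ)‖ ≤ kL * ‖P (rinv rδ)‖ := by
    have h1 : ‖K (r xc - rδ)‖ ≤ ‖K‖ * ‖r xc - rδ‖ := K.le_opNorm _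
    have h2 : ‖r xc - rδ‖ ≤ Lr * ‖xc - rinv rδ‖ := by
      have := hLr xc hxcU (rinv rδ) (hrmem rδ)
      rwa [hrright rδ] at this
    have h3 : xc - rinv rδ = -(P (rinv rδ)) := by rw [hPIp]; abel
    have h4 : ‖xc - rinv rδ‖ = ‖P (rinv rδ)‖ := by rw [h3, norm_neg]
    rw [h4] at h2
    have h5 : Lr * ‖P (rinv rδ)‖ ≤ Lr' * ‖P (rinv rδ)‖ :=
      mul_le_mul_of_nonneg_right (le_max_right 0 Lr) (norm_nonneg _)
    calc ‖K (r xc - rδ)‖ ≤ ‖K‖ * ‖r xc - rδ‖ := h1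
      _ ≤ ‖K‖ * (Lr' * ‖P (rinv rδ)‖) := by
          apply mul_le_mul_of_nonneg_left _ (norm_nonneg K)
          linarith
      _ = kL * ‖P (rinv rδ)‖ := by rw [hkL]; ring
  have harg : ‖K (r xc - r xd)‖ ≤ m + δ + kL * e + kL * (CQ' * q) := by
    have h1 : K (r xc - r xd) = K (r xc - rδ) + K (rδ - r xd) := by
      rw [← map_add]; congr 1; abel
    have h2 : ‖K (r xc - r xd)‖ ≤ ‖K (r xc - rδ)‖ + ‖K (rδ - r xd)‖ := by
      rw [h1]; exact norm_add_le _ _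
    have h3 : kL * ‖P (rinv rδ)‖ ≤ kL * (e + CQ' * q) :=
      mul_le_mul_of_nonneg_left hPr hkL0
    have h4 : kL * (e + CQ' * q) = kL * e + kL * (CQ' * q) := by ring
    linarith
  -- constants comparison
  have hc1 : (2 : ℝ) ^ (2 * p - 2) ≤ Cb := by
    rw [hCb]
    exact le_mul_of_one_le_right h2p.le
      (le_trans (le_max_left 1 (‖K‖ ^ p * Lr ^ p))
        (le_max_left (max 1 (‖K‖ ^ p * Lr ^ p)) (‖K‖ ^ p * Lr ^ p * CQ ^ p / β)))
  have hc2 : (2 : ℝ) ^ (2 * p - 2) * kL ^ p ≤ Cb := by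
    rcases le_or_gt 0 Lr with hL | hL
    · have hLr'eq : Lr' = Lr := max_eq_right hL
      have : kL ^ p = ‖K‖ ^ p * Lr ^ p := by
        rw [hkL, hLr'eq, Real.mul_rpow (norm_nonneg _) hL]
      rw [this, hCb]
      have hmax : ‖K‖ ^ p * Lr ^ p ≤
          max (max 1 (‖K‖ ^ p * Lr ^ p)) (‖K‖ ^ p * Lr ^ p * CQ ^ p / β) :=
        le_trans (le_max_right 1 _) (le_max_left _ _)
      exact mul_le_mul_of_nonneg_left hmax h2p.le
    · have hLr'eq : Lr' = 0 := max_eq_left hL.le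
      have : kL ^ p = 0 := by
        rw [hkL, hLr'eq, mul_zero, Real.zero_rpow (ne_of_gt hp0)]
      rw [this, mul_zero]
      exact hCbpos.le
  have hc3 : (2 : ℝ) ^ (2 * p - 2) * (kL ^ p * CQ' ^ p) ≤ Cb * β := by
    rcases le_or_gt 0 Lr with hL | hL
    · rcases le_or_gt 0 CQ with hC | hC
      · have hLr'eq : Lr' = Lr := max_eq_right hL
        have hCQ'eq : CQ' = CQ := max_eq_right hC
        have h1 : kL ^ p * CQ' ^ p = ‖K‖ ^ p * Lr ^ p * CQ ^ p := by
          rw [hkL, hLr'eq, hCQ'eq, Real.mul_rpow (norm_nonneg _) hL]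
        have hmax : ‖K‖ ^ p * Lr ^ p * CQ ^ p / β ≤
            max (max 1 (‖K‖ ^ p * Lr ^ p)) (‖K‖ ^ p * Lr ^ p * CQ ^ p / β) :=
          le_max_right _ _
        rw [← div_le_iff₀ hβ, h1]
        calc (2 : ℝ) ^ (2 * p - 2) * (‖K‖ ^ p * Lr ^ p * CQ ^ p) / β
            = 2 ^ (2 * p - 2) * (‖K‖ ^ p * Lr ^ p * CQ ^ p / β) := by ring
          _ ≤ 2 ^ (2 * p - 2) *
              max (max 1 (‖K‖ ^ p * Lr ^ p)) (‖K‖ ^ p * Lr ^ p * CQ ^ p / β) :=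
              mul_le_mul_of_nonneg_left hmax h2p.le
          _ = Cb := hCb.symm
      · have hCQ'eq : CQ' = 0 := max_eq_left hC.le
        rw [hCQ'eq, Real.zero_rpow (ne_of_gt hp0), mul_zero, mul_zero]
        exact (mul_pos hCbpos hβ).le
    · have hLr'eq : Lr' = 0 := max_eq_left hL.le
      have : kL ^ p = 0 := by
        rw [hkL, hLr'eq, mul_zero, Real.zero_rpow (ne_of_gt hp0)]
      rw [this, zero_mul, mul_zero]
      exact (mul_pos hCbpos hβ).le
  -- power estimate on the VSC argument
  have hargp : ‖K (r xc - r xd)‖ ^ p ≤ Cb * (T2 + δ ^ p) := by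
    have h0 : 0 ≤ m + δ + kL * e + kL * (CQ' * q) := by
      have := mul_nonneg hkL0 he0
      have := mul_nonneg hkL0 (mul_nonneg hCQ'0 hq0)
      linarith [hδ.le]
    have h1 : ‖K (r xc - r xd)‖ ^ p ≤ (m + δ + kL * e + kL * (CQ' * q)) ^ p :=
      Real.rpow_le_rpow (norm_nonneg _) harg hp0.le
    have h2 : (m + δ + kL * e + kL * (CQ' * q)) ^ p ≤
        2 ^ (2 * p - 2) * (m ^ p + δ ^ p + (kL * e) ^ p + (kL * (CQ' * q)) ^ p) :=
      aux_four_rpow p hp hm0 hδ.le (mul_nonneg hkL0 he0)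
        (mul_nonneg hkL0 (mul_nonneg hCQ'0 hq0))
    have h3 : (kL * e) ^ p = kL ^ p * e ^ p := Real.mul_rpow hkL0 he0
    have h4 : (kL * (CQ' * q)) ^ p = kL ^ p * (CQ' ^ p * q ^ p) := by
      rw [Real.mul_rpow hkL0 (mul_nonneg hCQ'0 hq0), Real.mul_rpow hCQ'0 hq0]
    have g1 : 2 ^ (2 * p - 2) * m ^ p ≤ Cb * m ^ p := mul_le_mul_of_nonneg_right hc1 hmp0
    have g2 : 2 ^ (2 * p - 2) * δ ^ p ≤ Cb * δ ^ p := mul_le_mul_of_nonneg_right hc1 hδp0.le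
    have g3 : 2 ^ (2 * p - 2) * (kL ^ p * e ^ p) ≤ Cb * e ^ p := by
      have := mul_le_mul_of_nonneg_right hc2 hep0
      linarith [this]
    have g4 : 2 ^ (2 * p - 2) * (kL ^ p * (CQ' ^ p * q ^ p)) ≤ Cb * (β * q ^ p) := by
      have := mul_le_mul_of_nonneg_right hc3 hqp0
      linarith [this]
    rw [h3, h4] at h2
    rw [hT2]
    linarith [h1, h2, g1, g2, g3, g4]
  -- Fenchel applied to the VSC argument, multiplied by α
  set W : ℝ := ψ (‖K (r xc - r xd)‖ ^ p) with hW
  have hαW : α * W ≤ (T2 + δ ^ p) / 2 + α * E := by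
    have hargnn : (0 : ℝ) ≤ ‖K (r xc - r xd)‖ ^ p := Real.rpow_nonneg (norm_nonneg _) p
    have hCbTnn : (0 : ℝ) ≤ Cb * (T2 + δ ^ p) := by positivity
    have h1 : W ≤ ψ (Cb * (T2 + δ ^ p)) := hψmono hargnn hCbTnn hargp
    have h2 : ψ (Cb * (T2 + δ ^ p)) ≤ Cb * (T2 + δ ^ p) / (2 * Cb * α) + E :=
      hFen _ hCbTnn
    have h3 : α * (Cb * (T2 + δ ^ p) / (2 * Cb * α)) = (T2 + δ ^ p) / 2 := by
      field_simp
    have h4 : α * W ≤ α * (Cb * (T2 + δ ^ p) / (2 * Cb * α) + E) :=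
      mul_le_mul_of_nonneg_left (le_trans h1 h2) hα.le
    rw [mul_add, h3] at h4
    exact h4
  -- VSC
  set vΔ : ℝ := Rc xc - Rc xd - ξ (xc - xd) with hvΔ
  have hvsc : -(ξ (xc - xd)) ≤ b * vΔ + W := hVSC xc hxcXc hxcU
  have hvΔ0 : 0 ≤ vΔ := by
    have := hξ xc hxcXc
    rw [hvΔ]; linarith
  have hf1 : vΔ - b * vΔ ≤ (Rc xc - Rc xd) + W := by
    rw [hvΔ] at hvsc ⊢
    linarith
  clear_value E m e q xc Lr' CQ' kL W vΔ T2
  -- αDR bound from key1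
  have hDR : α * (Rc xc - Rc xd) ≤ δ ^ p + η - T2 := by
    rw [hT2]; linarith
  -- first conclusion
  have h1b : (0 : ℝ) < 1 - b := by linarith
  have hτl0 : τl ≠ 0 := ne_of_gt hτl
  have h1b0 : (1 : ℝ) - b ≠ 0 := ne_of_gt h1b
  have step1 : α * (vΔ - b * vΔ) ≤ (3 / 2) * δ ^ p + η + α * E := by
    have g := mul_le_mul_of_nonneg_left hf1 hα.le
    rw [mul_add] at g
    linarith [hαW, hDR, hT2nn]
  have step3 : τl * ((1 - b) * vΔ) ≤ (2 + Cη + τl) * E := by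
    have hαE0 : 0 ≤ α * E := mul_nonneg hα.le hE0
    have h' : α * (τl * ((1 - b) * vΔ)) ≤ α * ((2 + Cη + τl) * E) := by
      have g1 := mul_le_mul_of_nonneg_left step1 hτl.le
      have g2 : (3 / 2 + Cη) * (τl * δ ^ p) ≤ (3 / 2 + Cη) * (α * E) :=
        mul_le_mul_of_nonneg_left hpar1' (by linarith)
      have g3 : τl * η ≤ τl * (Cη * δ ^ p) := mul_le_mul_of_nonneg_left hη hτl.le
      linarith [g1, g2, g3, hαE0]
    exact le_of_mul_le_mul_left h' hα
  constructor
  · have hEq : (1 / (1 - b)) * ((2 + Cη) / τl + 1) * E =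
        ((2 + Cη + τl) * E) / ((1 - b) * τl) := by
      field_simp
    show vΔ ≤ (1 / (1 - b)) * ((2 + Cη) / τl + 1) * E
    rw [hEq, le_div_iff₀ (mul_pos h1b hτl)]
    linarith [step3]
  -- second conclusion
  · have hT2bound : T2 ≤ 3 * δ ^ p + 2 * η + 2 * (α * E) := by
      have hDRlow : -(Rc xc - Rc xd) ≤ W := by
        have h1 : 0 ≤ vΔ - b * vΔ := by
          have := mul_nonneg (sub_nonneg.mpr hb1.le) hvΔ0
          linarith [this]
        linarith [hf1]
      have h2 : α * (-(Rc xc - Rc xd)) ≤ α * W := mul_le_mul_of_nonneg_left hDRlow hα.le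
      have h3 : T2 + α * (Rc xc - Rc xd) ≤ δ ^ p + η := by rw [hT2]; linarith [key1]
      linarith [hαW]
    have hApow : (2 : ℝ) ^ (1 - p) * ‖K (rδ - r xd)‖ ^ p ≤ m ^ p + δ ^ p := by
      have h1 : ‖K (rδ - r xd)‖ ^ p ≤ (m + δ) ^ p :=
        Real.rpow_le_rpow (norm_nonneg _) hA hp0.le
      have h2 : (m + δ) ^ p ≤ 2 ^ (p - 1) * (m ^ p + δ ^ p) := aux_two_rpow p hp hm0 hδ.le
      have h3 : (2 : ℝ) ^ (1 - p) * 2 ^ (p - 1) = 1 := by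
        rw [← Real.rpow_add two_pos]; norm_num
      have h4 : (0 : ℝ) < 2 ^ (1 - p) := Real.rpow_pos_of_pos two_pos _
      have h5 := mul_le_mul_of_nonneg_left (le_trans h1 h2) h4.le
      rw [← mul_assoc, h3, one_mul] at h5
      exact h5
    show (2 : ℝ) ^ (1 - p) * ‖K (rδ - r xd)‖ ^ p + β * q ^ p + e ^ p ≤
        2 * (2 + Cη + τu) * δ ^ p
    have : β * q ^ p + e ^ p = T2 - m ^ p := by rw [hT2]; ring
    linarith [hApow, hT2bound, hpar2', hη]
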